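/- Let p be a real-valued valuated matroid of rank d on {1,…,n} and let x ∈ ℝⁿ. Define w ∈ ℝⁿ by the Blue Rule: w_i = min over all (d−1)-subsets σ ⊆ {1,…,n} with i ∉ σ of max over all j ∉ σ of (p(σ∪{i}) − p(σ∪{j}) + x_j). Then w ∈ L_p, w ≥ x coordinatewise, and w ≤ w' coordinatewise for every w' ∈ L_p with w' ≥ x; that is, w is the nearest point projection π_{L_p}(x) of x onto the tropical linear space L_p. -/

import Mathlib

/- Blue Rule: for a real-valued valuated matroid p of rank d on {1,…,n} and x ∈ ℝⁿ, the
   point w with w_i = min_{σ : |σ| = d−1, i ∉ σ} max_{j ∉ σ} (p(σ∪{i}) − p(σ∪{j}) + x_j)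
   is the nearest point projection of x onto the tropical linear space L_p: w ∈ L_p,
   w ≥ x, and w ≤ w' for every w' ∈ L_p with w' ≥ x. -/

noncomputable section

/-- The minimum of `f` over the finite set `s` is attained at least twice. -/
def MinAttainedTwice {ι α : Type*} [LinearOrder α] (s : Finset ι) (f : ι → α) : Prop :=
  ∃ i ∈ s, ∃ j ∈ s, i ≠ j ∧ f i = f j ∧ ∀ k ∈ s, f i ≤ f k

/-- A real-valued valuated matroid of rank `d` on `{1,…,n}` (only the values on
`d`-element subsets matter): the exchange axiom with minimum over `i ∈ τ ∖ σ`. -/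
def IsValuatedMatroidR (d n : ℕ) (p : Finset (Fin n) → ℝ) : Prop :=
  ∀ σ τ : Finset (Fin n), σ.card = d - 1 → τ.card = d + 1 →
    MinAttainedTwice (τ \ σ) (fun i => p (insert i σ) + p (τ.erase i))

/-- Membership in the tropical linear space `L_p`. -/
def InTropLinSpace (d n : ℕ) (p : Finset (Fin n) → ℝ) (x : Fin n → ℝ) : Prop :=
  ∀ τ : Finset (Fin n), τ.card = d + 1 →
    MinAttainedTwice τ (fun i => p (τ.erase i) + x i)

/-- The Blue Rule:
`w i = min_{σ : |σ| = d−1, i ∉ σ} max_{j ∉ σ} (p(σ∪{i}) − p(σ∪{j}) + x j)`.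
(The inner maximum is taken over `insert i σᶜ`, which equals `σᶜ` for the
relevant sets `σ` with `i ∉ σ`.) -/
def blueRule {n : ℕ} (d : ℕ) (hd : 1 ≤ d) (hdn : d ≤ n)
    (p : Finset (Fin n) → ℝ) (x : Fin n → ℝ) : Fin n → ℝ :=
  fun i =>
    (((Finset.univ : Finset (Fin n)).powersetCard (d - 1)).filter (fun σ => i ∉ σ)).inf'
      (by
        obtain ⟨t, hts, htc⟩ := Finset.exists_subset_card_eq (s := Finset.univ.erase i) (n := d - 1)
          (by
            have hc : (Finset.univ.erase i).card = n - 1 := by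
              rw [Finset.card_erase_of_mem (Finset.mem_univ i)]
              simp
            omega)
        refine ⟨t, Finset.mem_filter.mpr ⟨Finset.mem_powersetCard.mpr
          ⟨Finset.subset_univ t, htc⟩, fun hit => ?_⟩⟩
        exact (Finset.notMem_erase i Finset.univ) (hts hit))
      (fun σ => (insert i σᶜ).sup' (Finset.insert_nonempty _ _)
        (fun j => p (insert i σ) - p (insert j σ) + x j))

theorem blue_rule_is_projection {d n : ℕ} (hd : 1 ≤ d) (hdn : d ≤ n)
    (p : Finset (Fin n) → ℝ) (hp : IsValuatedMatroidR d n p) (x : Fin n → ℝ) :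
    InTropLinSpace d n p (blueRule d hd hdn p x) ∧
    x ≤ blueRule d hd hdn p x ∧
    ∀ w' : Fin n → ℝ, InTropLinSpace d n p w' → x ≤ w' →
      blueRule d hd hdn p x ≤ w' := by
  set w := blueRule d hd hdn p x with hwdef
  -- upper bound accessor
  have hwle : ∀ (i : Fin n) (σ : Finset (Fin n)), σ.card = d - 1 → i ∉ σ →
      w i ≤ (insert i σᶜ).sup' (Finset.insert_nonempty _ _)
        (fun j => p (insert i σ) - p (insert j σ) + x j) := fun i σ hσ hiσ =>
    Finset.inf'_le _ (Finset.mem_filter.mpr ⟨Finset.mem_powersetCard.mpr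
      ⟨Finset.subset_univ _, hσ⟩, hiσ⟩)
  -- minimizer accessor
  have hwex : ∀ i : Fin n, ∃ σ : Finset (Fin n), σ.card = d - 1 ∧ i ∉ σ ∧
      w i = (insert i σᶜ).sup' (Finset.insert_nonempty _ _)
        (fun j => p (insert i σ) - p (insert j σ) + x j) := by
    intro i
    obtain ⟨σ, hσmem, hσeq⟩ := Finset.exists_mem_eq_inf'
      (s := ((Finset.univ : Finset (Fin n)).powersetCard (d - 1)).filter (fun σ => i ∉ σ))
      (by
        obtain ⟨t, hts, htc⟩ := Finset.exists_subset_card_eq (s := Finset.univ.erase i)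
          (n := d - 1)
          (by
            have hc : (Finset.univ.erase i).card = n - 1 := by
              rw [Finset.card_erase_of_mem (Finset.mem_univ i)]
              simp
            omega)
        refine ⟨t, Finset.mem_filter.mpr ⟨Finset.mem_powersetCard.mpr
          ⟨Finset.subset_univ t, htc⟩, fun hit => ?_⟩⟩
        exact (Finset.notMem_erase i Finset.univ) (hts hit))
      (fun σ => (insert i σᶜ).sup' (Finset.insert_nonempty _ _)
        (fun j => p (insert i σ) - p (insert j σ) + x j))
    obtain ⟨hσpc, hiσ⟩ := Finset.mem_filter.mp hσmem
    obtain ⟨-, hσcard⟩ := Finset.mem_powersetCard.mp hσpc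
    exact ⟨σ, hσcard, hiσ, hσeq⟩
  -- x ≤ w
  have hxw : x ≤ w := by
    intro i
    refine Finset.le_inf' _ _ fun σ hσ => ?_
    have h := Finset.le_sup' (fun j => p (insert i σ) - p (insert j σ) + x j)
      (Finset.mem_insert_self i σᶜ)
    simpa using h
  refine ⟨?_, hxw, ?_⟩
  · -- membership in L_p
    intro τ hτ
    have hτne : τ.Nonempty := Finset.card_pos.mp (by omega)
    obtain ⟨i0, hi0τ, hi0min⟩ := τ.exists_min_image (fun i => p (τ.erase i) + w i) hτne
    obtain ⟨σ0, hσ0card, hi0σ0, hw0⟩ := hwex i0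
    have hi0c : i0 ∈ σ0ᶜ := Finset.mem_compl.mpr hi0σ0
    set μ := σ0ᶜ.sup' ⟨i0, hi0c⟩ (fun j => x j - p (insert j σ0)) with hμ
    -- w c ≤ p(σ0 ∪ c) + μ for c ∉ σ0
    have hub : ∀ c : Fin n, c ∉ σ0 → w c ≤ p (insert c σ0) + μ := by
      intro c hc
      refine (hwle c σ0 hσ0card hc).trans (Finset.sup'_le _ _ fun j hj => ?_)
      have hjc : j ∈ σ0ᶜ := by
        rcases Finset.mem_insert.mp hj with h | h
        · subst h; exact Finset.mem_compl.mpr hc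
        · exact h
      have := Finset.le_sup' (fun j => x j - p (insert j σ0)) hjc
      linarith [this]
    -- p(σ0 ∪ i0) + μ ≤ w i0
    have hlb : p (insert i0 σ0) + μ ≤ w i0 := by
      obtain ⟨j, hjc, hje⟩ := Finset.exists_mem_eq_sup' ⟨i0, hi0c⟩
        (fun j => x j - p (insert j σ0))
      rw [hw0]
      have := Finset.le_sup' (fun j => p (insert i0 σ0) - p (insert j σ0) + x j)
        (Finset.mem_insert_of_mem (b := i0) hjc)
      rw [hμ, hje]
      linarith [this]
    obtain ⟨a, haτ, b, hbτ, hab, hfab, hfmin⟩ := hp σ0 τ hσ0card hτ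
    have hi0' : i0 ∈ τ \ σ0 := Finset.mem_sdiff.mpr ⟨hi0τ, hi0σ0⟩
    have hfa_le : p (insert a σ0) + p (τ.erase a) ≤
        p (insert i0 σ0) + p (τ.erase i0) := hfmin i0 hi0'
    have key : ∀ c ∈ τ \ σ0,
        p (insert c σ0) + p (τ.erase c) ≤ p (insert i0 σ0) + p (τ.erase i0) →
        p (τ.erase c) + w c ≤ p (τ.erase i0) + w i0 := by
      intro c hc hle
      obtain ⟨hcτ, hcσ0⟩ := Finset.mem_sdiff.mp hc
      have h1 := hub c hcσ0
      linarith [hlb]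
    have haτ' : a ∈ τ := (Finset.mem_sdiff.mp haτ).1
    have hbτ' : b ∈ τ := (Finset.mem_sdiff.mp hbτ).1
    have hga : p (τ.erase a) + w a ≤ p (τ.erase i0) + w i0 := key a haτ hfa_le
    have hfab' : p (insert a σ0) + p (τ.erase a) = p (insert b σ0) + p (τ.erase b) := hfab
    have hgb : p (τ.erase b) + w b ≤ p (τ.erase i0) + w i0 :=
      key b hbτ (by linarith [hfab', hfa_le])
    have hgamin : ∀ k ∈ τ, p (τ.erase a) + w a ≤ p (τ.erase k) + w k := by
      intro k hk
      exact hga.trans (hi0min k hk)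
    have hgaeq : p (τ.erase a) + w a = p (τ.erase b) + w b :=
      le_antisymm (hgamin b hbτ') (hgb.trans (hi0min a haτ'))
    exact ⟨a, haτ', b, hbτ', hab, hgaeq, hgamin⟩
  · -- minimality
    intro w' hw' hxw' i
    -- choose a d-set B containing i minimizing p B - ∑ w'
    have hTne : ∃ B : Finset (Fin n), B ∈ ((Finset.univ : Finset (Fin n)).powersetCard d).filter
        (fun B => i ∈ B) := by
      obtain ⟨u, hiu, -, huc⟩ := Finset.exists_subsuperset_card_eq
        (s := ({i} : Finset (Fin n))) (t := Finset.univ) (Finset.subset_univ _)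
        (by simpa using hd) (by simpa using hdn)
      exact ⟨u, Finset.mem_filter.mpr ⟨Finset.mem_powersetCard.mpr
        ⟨Finset.subset_univ _, huc⟩, hiu (Finset.mem_singleton_self i)⟩⟩
    obtain ⟨B, hBmem, hBmin⟩ := Finset.exists_min_image _
      (fun B => p B - ∑ k ∈ B, w' k) ⟨hTne.choose, hTne.choose_spec⟩
    obtain ⟨hBpc, hiB⟩ := Finset.mem_filter.mp hBmem
    obtain ⟨-, hBcard⟩ := Finset.mem_powersetCard.mp hBpc
    set σ := B.erase i with hσdef
    have hσcard : σ.card = d - 1 := by rw [hσdef, Finset.card_erase_of_mem hiB, hBcard]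
    have hiσ : i ∉ σ := Finset.notMem_erase i B
    have hins : insert i σ = B := Finset.insert_erase hiB
    refine (hwle i σ hσcard hiσ).trans (Finset.sup'_le _ _ fun j hj => ?_)
    rcases Finset.mem_insert.mp hj with hji | hjc
    · subst hji
      rw [hins]
      simpa using hxw' j
    · by_cases hji : j = i
      · subst hji
        rw [hins]
        simpa using hxw' j
      · have hjσ : j ∉ σ := Finset.mem_compl.mp hjc
        have hjB : j ∉ B := by
          intro hjB
          exact hjσ (Finset.mem_erase.mpr ⟨hji, hjB⟩)
        set τ : Finset (Fin n) := insert j B with hτdef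
        have hτcard : τ.card = d + 1 := by
          rw [hτdef, Finset.card_insert_of_notMem hjB, hBcard]
        have hiτ : i ∈ τ := Finset.mem_insert_of_mem hiB
        have hjτ : j ∈ τ := Finset.mem_insert_self j B
        have hτej : τ.erase j = B := Finset.erase_insert hjB
        have hτei : τ.erase i = insert j σ := by
          rw [hτdef, hσdef, Finset.erase_insert_of_ne hji]
        -- key: f j ≤ f k for all k ∈ τ, k ≠ i
        have hfk : ∀ k ∈ τ, k ≠ i → p B + w' j ≤ p (τ.erase k) + w' k := by
          intro k hkτ hki
          have hmem : τ.erase k ∈ ((Finset.univ : Finset (Fin n)).powersetCard d).filter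
              (fun B => i ∈ B) := by
            refine Finset.mem_filter.mpr ⟨Finset.mem_powersetCard.mpr
              ⟨Finset.subset_univ _, ?_⟩, Finset.mem_erase.mpr ⟨Ne.symm hki, hiτ⟩⟩
            rw [Finset.card_erase_of_mem hkτ, hτcard]
            omega
          have hq := hBmin _ hmem
          have hsum1 : ∑ l ∈ τ.erase k, w' l + w' k = ∑ l ∈ τ, w' l :=
            Finset.sum_erase_add τ w' hkτ
          have hsum2 : ∑ l ∈ B, w' l + w' j = ∑ l ∈ τ, w' l := by
            rw [← hτej]; exact Finset.sum_erase_add τ w' hjτ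
          linarith
        -- conclude f j ≤ f i using MinAttainedTwice
        have hkey : p B + w' j ≤ p (insert j σ) + w' i := by
          by_contra hcon
          push_neg at hcon
          obtain ⟨a, haτ, b, hbτ, hab, hfab, hfmin⟩ := hw' τ hτcard
          have hai : a = i := by
            by_contra hai
            have h1 := hfk a haτ hai
            have h2 : p (τ.erase a) + w' a ≤ p (τ.erase i) + w' i := hfmin i hiτ
            rw [hτei] at h2
            linarith
          have hbi : b = i := by
            by_contra hbi
            have h1 := hfk b hbτ hbi
            have h2 : p (τ.erase a) + w' a ≤ p (τ.erase i) + w' i := hfmin i hiτ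
            rw [hτei] at h2
            simp only at h1 h2 hfab
            linarith
          exact hab (hai.trans hbi.symm)
        have hxj := hxw' j
        rw [hins]
        simp only at hxj ⊢
        linarith
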